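/- Let t, t' ∈ ℝ⁴ satisfy (t⁰)² − |t⃗|² = 1, t⁰ > 0, and (t'⁰)² − |t⃗'|² = 1, t'⁰ > 0 (unit, future-pointing timelike vectors). Then t·t' ≥ 1, and for every p ∈ ℝ⁴ with (p⁰)² ≥ |p⃗|² and p⁰ ≥ 0 (p in the closed forward light cone) one has t·p ≥ (t·t' − √((t·t')² − 1))·(t'·p); equivalently, t·p ≥ e^{−ξ}·(t'·p), where ξ ≥ 0 is defined by cosh ξ = t·t'. -/
import Mathlib


/-- The Minkowski inner product on `ℝ⁴ = ℝ × ℝ³`: `x·y = x⁰y⁰ − x⃗·y⃗`. -/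
def mink (x y : Fin 4 → ℝ) : ℝ :=
  x 0 * y 0 - (x 1 * y 1 + x 2 * y 2 + x 3 * y 3)

/-- Cauchy–Schwarz in three variables. -/
lemma cs3 (x1 x2 x3 y1 y2 y3 : ℝ) :
    (x1*y1 + x2*y2 + x3*y3)^2 ≤ (x1^2+x2^2+x3^2) * (y1^2+y2^2+y3^2) := by
  nlinarith [sq_nonneg (x1*y2 - x2*y1), sq_nonneg (x1*y3 - x3*y1), sq_nonneg (x2*y3 - x3*y2)]


lemma aux_q0 (q0 q1 q2 q3 b0 b1 b2 b3 s : ℝ) (hb0 : 0 < b0)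
    (hB : b1^2 + b2^2 + b3^2 = b0^2 - 1)
    (hqq : q1^2 + q2^2 + q3^2 = q0^2)
    (hD : q1*b1 + q2*b2 + q3*b3 = q0*b0 - s) (hs0 : 0 ≤ s) : 0 ≤ q0 := by
  by_contra h
  push_neg at h
  have hcs := cs3 q1 q2 q3 b1 b2 b3
  rw [hD, hqq, hB] at hcs
  have h2 : (0:ℝ) ≤ -q0 * b0 * s := mul_nonneg (mul_nonneg (neg_nonneg.mpr h.le) hb0.le) hs0
  have h3 : 0 < q0 * q0 := mul_pos_of_neg_of_neg h h
  nlinarith [hcs, sq_nonneg s, h2, h3]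

lemma aux_key (q0 q1 q2 q3 p0 p1 p2 p3 : ℝ)
    (hqq : q1^2 + q2^2 + q3^2 = q0^2) (hq0 : 0 ≤ q0)
    (hp : p1^2 + p2^2 + p3^2 ≤ p0^2) (hp0 : 0 ≤ p0) :
    0 ≤ q0*p0 - (q1*p1 + q2*p2 + q3*p3) := by
  have hcs := cs3 q1 q2 q3 p1 p2 p3
  rw [hqq] at hcs
  by_contra hgt
  push_neg at hgt
  have h5 : q0 * p0 < q1*p1 + q2*p2 + q3*p3 := by linarith
  have h6 : (q1*p1 + q2*p2 + q3*p3)^2 ≤ (q0*p0)^2 := by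
    nlinarith [hcs, mul_le_mul_of_nonneg_left hp (sq_nonneg q0)]
  have h7 := mul_self_lt_mul_self (mul_nonneg hq0 hp0) h5
  nlinarith [h6, h7]

/-- For unit, future-pointing timelike vectors `t, t'` one has `t·t' ≥ 1`, and for every
`p` in the closed forward light cone, `t·p ≥ (t·t' − √((t·t')² − 1))·(t'·p)`
(i.e. `t·p ≥ e^{−ξ} t'·p` with `cosh ξ = t·t'`, `ξ ≥ 0`). -/
theorem stmt11 (t t' : Fin 4 → ℝ)
    (ht : mink t t = 1) (ht0 : 0 < t 0)
    (ht' : mink t' t' = 1) (ht'0 : 0 < t' 0) :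
    1 ≤ mink t t' ∧
    ∀ p : Fin 4 → ℝ, (p 1) ^ 2 + (p 2) ^ 2 + (p 3) ^ 2 ≤ (p 0) ^ 2 → 0 ≤ p 0 →
      (mink t t' - Real.sqrt ((mink t t') ^ 2 - 1)) * mink t' p ≤ mink t p := by
  simp only [mink] at ht ht'
  have hc : 1 ≤ mink t t' := by
    simp only [mink]
    have h1 : 1 ≤ t 0 := by
      nlinarith [sq_nonneg (t 1), sq_nonneg (t 2), sq_nonneg (t 3)]
    have h1' : 1 ≤ t' 0 := by
      nlinarith [sq_nonneg (t' 1), sq_nonneg (t' 2), sq_nonneg (t' 3)]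
    nlinarith [cs3 (t 1) (t 2) (t 3) (t' 1) (t' 2) (t' 3), sq_nonneg (t 0 - t' 0),
      mul_le_mul h1 h1' zero_le_one (by linarith : (0:ℝ) ≤ t 0)]
  refine ⟨hc, ?_⟩
  intro p hp hp0
  set c := mink t t' with hcdef
  have hcc : c = t 0 * t' 0 - (t 1 * t' 1 + t 2 * t' 2 + t 3 * t' 3) := by
    rw [hcdef]; rfl
  set s := Real.sqrt (c ^ 2 - 1) with hsdef
  have hs2 : s ^ 2 = c ^ 2 - 1 := Real.sq_sqrt (by nlinarith)
  have hs0 : 0 ≤ s := Real.sqrt_nonneg _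
  clear_value s
  clear hsdef
  clear_value c
  clear hcdef
  have hL : (c - s) ^ 2 - 2 * c * (c - s) + 1 = 0 := by nlinarith
  -- q = t - (c-s) • t'
  set q0 := t 0 - (c-s)*t' 0 with hq0def
  set q1 := t 1 - (c-s)*t' 1 with hq1def
  set q2 := t 2 - (c-s)*t' 2 with hq2def
  set q3 := t 3 - (c-s)*t' 3 with hq3def
  have hB : t' 1 ^ 2 + t' 2 ^ 2 + t' 3 ^ 2 = t' 0 ^ 2 - 1 := by linear_combination (-1:ℝ) * ht'
  -- q is null:
  have hqq : q1^2 + q2^2 + q3^2 = q0^2 := by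
    rw [hq0def, hq1def, hq2def, hq3def]
    linear_combination (-1 : ℝ) * ht - (c-s)^2 * ht' - 2*(c-s) * hcc - hL
  have hDval : q1 * t' 1 + q2 * t' 2 + q3 * t' 3 = q0 * t' 0 - s := by
    rw [hq0def, hq1def, hq2def, hq3def]
    linear_combination hcc + (c-s) * ht'
  have hPsplit : mink t p - (c - s) * mink t' p = q0 * p 0 - (q1 * p 1 + q2 * p 2 + q3 * p 3) := by
    rw [hq0def, hq1def, hq2def, hq3def]
    simp only [mink]; ring
  clear_value q0 q1 q2 q3
  clear hq0def hq1def hq2def hq3def hcc ht hL hs2 hc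
  -- q is future pointing:
  have hq0 : 0 ≤ q0 :=
    aux_q0 q0 q1 q2 q3 (t' 0) (t' 1) (t' 2) (t' 3) s ht'0 hB hqq hDval hs0
  -- q·p ≥ 0:
  have key : 0 ≤ q0 * p 0 - (q1 * p 1 + q2 * p 2 + q3 * p 3) :=
    aux_key q0 q1 q2 q3 (p 0) (p 1) (p 2) (p 3) hqq hq0 hp hp0
  linarith [key, hPsplit.ge, hPsplit.le]
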